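/- Let A and B be real symmetric positive definite n×n matrices. Then the geometric mean is symmetric in its arguments: A^{1/2} (A^{−1/2} B A^{−1/2})^{1/2} A^{1/2} = B^{1/2} (B^{−1/2} A B^{−1/2})^{1/2} B^{1/2}, i.e. [A,B]_{1/2} = [B,A]_{1/2}. -/

import Mathlib

open Matrix

/-- Symmetry of the geometric mean of two real symmetric positive definite matrices:
`A^{1/2}(A^{−1/2} B A^{−1/2})^{1/2} A^{1/2} = B^{1/2}(B^{−1/2} A B^{−1/2})^{1/2} B^{1/2}`.
The (unique) positive semidefinite square roots are characterized by the hypotheses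
`SA * SA = A`, `GA * GA = SA⁻¹ * B * SA⁻¹`, etc. -/
theorem stmt_7 (n : ℕ) (A B : Matrix (Fin n) (Fin n) ℝ)
    (hA : A.PosDef) (hB : B.PosDef)
    (SA SB GA GB : Matrix (Fin n) (Fin n) ℝ)
    (hSA : SA.PosSemidef) (hSA2 : SA * SA = A)
    (hSB : SB.PosSemidef) (hSB2 : SB * SB = B)
    (hGA : GA.PosSemidef) (hGA2 : GA * GA = SA⁻¹ * B * SA⁻¹)
    (hGB : GB.PosSemidef) (hGB2 : GB * GB = SB⁻¹ * A * SB⁻¹) :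
    SA * GA * SA = SB * GB * SB := by
  -- determinants are nonzero
  have hdA : A.det ≠ 0 := hA.det_pos.ne'
  have hdB : B.det ≠ 0 := hB.det_pos.ne'
  have hdSA : SA.det ≠ 0 := by
    intro h
    apply hdA
    rw [← hSA2, det_mul, h, mul_zero]
  have hdSB : SB.det ≠ 0 := by
    intro h
    apply hdB
    rw [← hSB2, det_mul, h, mul_zero]
  have hSAu : IsUnit SA.det := isUnit_iff_ne_zero.2 hdSA
  have hSBu : IsUnit SB.det := isUnit_iff_ne_zero.2 hdSB
  have hBeq : SA * (GA * GA) * SA = B := by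
    rw [hGA2]
    calc SA * (SA⁻¹ * B * SA⁻¹) * SA = (SA * SA⁻¹) * B * (SA⁻¹ * SA) := by noncomm_ring
      _ = B := by rw [mul_nonsing_inv _ hSAu, nonsing_inv_mul _ hSAu]; simp
  have hdGA : GA.det ≠ 0 := by
    intro h
    apply hdB
    rw [← hBeq, det_mul, det_mul, det_mul, h]; ring
  set M := SA * GA * SA with hMdef
  set N := SB * GB * SB with hNdef
  have hdM : M.det ≠ 0 := by
    rw [hMdef, det_mul, det_mul]
    exact mul_ne_zero (mul_ne_zero hdSA hdGA) hdSA
  have hMu : IsUnit M.det := isUnit_iff_ne_zero.2 hdM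
  -- M * A⁻¹ * M = B
  have hMA : M * A⁻¹ * M = B := by
    rw [hMdef, ← hSA2, Matrix.mul_inv_rev]
    calc SA * GA * SA * (SA⁻¹ * SA⁻¹) * (SA * GA * SA)
        = SA * GA * ((SA * SA⁻¹) * (SA⁻¹ * SA)) * GA * SA := by noncomm_ring
      _ = SA * (GA * GA) * SA := by
          rw [mul_nonsing_inv _ hSAu, nonsing_inv_mul _ hSAu]; noncomm_ring
      _ = B := hBeq
  -- N * B⁻¹ * N = A
  have hNB : N * B⁻¹ * N = A := by
    rw [hNdef, ← hSB2, Matrix.mul_inv_rev]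
    calc SB * GB * SB * (SB⁻¹ * SB⁻¹) * (SB * GB * SB)
        = SB * GB * ((SB * SB⁻¹) * (SB⁻¹ * SB)) * GB * SB := by noncomm_ring
      _ = SB * (GB * GB) * SB := by
          rw [mul_nonsing_inv _ hSBu, nonsing_inv_mul _ hSBu]; noncomm_ring
      _ = SB * (SB⁻¹ * A * SB⁻¹) * SB := by rw [hGB2]
      _ = (SB * SB⁻¹) * A * (SB⁻¹ * SB) := by noncomm_ring
      _ = A := by rw [mul_nonsing_inv _ hSBu, nonsing_inv_mul _ hSBu]; simp
  -- M * B⁻¹ * M = A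
  have hMB : M * B⁻¹ * M = A := by
    have hBinv : B⁻¹ = M⁻¹ * A * M⁻¹ := by
      apply inv_eq_right_inv
      rw [← hMA]
      calc (M * A⁻¹ * M) * (M⁻¹ * A * M⁻¹)
          = M * A⁻¹ * (M * M⁻¹) * A * M⁻¹ := by noncomm_ring
        _ = M * (A⁻¹ * A) * M⁻¹ := by rw [mul_nonsing_inv _ hMu]; noncomm_ring
        _ = M * M⁻¹ := by rw [nonsing_inv_mul _ (isUnit_iff_ne_zero.2 hdA)]; noncomm_ring
        _ = 1 := mul_nonsing_inv _ hMu
    rw [hBinv]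
    calc M * (M⁻¹ * A * M⁻¹) * M = (M * M⁻¹) * A * (M⁻¹ * M) := by noncomm_ring
      _ = A := by rw [mul_nonsing_inv _ hMu, nonsing_inv_mul _ hMu]; simp
  -- positive semidefiniteness of M and of X := SB⁻¹ * M * SB⁻¹
  have hMpsd : M.PosSemidef := by
    have := hGA.mul_mul_conjTranspose_same SA
    rwa [hSA.1, ← hMdef] at this
  have hXpsd : (SB⁻¹ * M * SB⁻¹).PosSemidef := by
    have := hMpsd.mul_mul_conjTranspose_same SB⁻¹
    rwa [hSB.inv.1] at this
  -- (SB⁻¹ * M * SB⁻¹)^2 = GB^2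
  have hsq : (SB⁻¹ * M * SB⁻¹) ^ 2 = GB ^ 2 := by
    have hBinv : SB⁻¹ * SB⁻¹ = B⁻¹ := by rw [← hSB2, Matrix.mul_inv_rev]
    rw [pow_two, pow_two, hGB2]
    calc SB⁻¹ * M * SB⁻¹ * (SB⁻¹ * M * SB⁻¹)
        = SB⁻¹ * (M * (SB⁻¹ * SB⁻¹) * M) * SB⁻¹ := by noncomm_ring
      _ = SB⁻¹ * A * SB⁻¹ := by rw [hBinv, hMB]
  have hX : SB⁻¹ * M * SB⁻¹ = GB := by
    open scoped MatrixOrder in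
    exact (CFC.sq_eq_sq_iff _ _ (Matrix.nonneg_iff_posSemidef.2 hXpsd)
      (Matrix.nonneg_iff_posSemidef.2 hGB)).1 hsq
  -- conclude
  calc M = (SB * SB⁻¹) * M * (SB⁻¹ * SB) := by
          rw [mul_nonsing_inv _ hSBu, nonsing_inv_mul _ hSBu]; simp
    _ = SB * (SB⁻¹ * M * SB⁻¹) * SB := by noncomm_ring
    _ = SB * GB * SB := by rw [hX]
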